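/- arXiv:2202.06411 — 5 statements merged into one kernel-verified Lean document; each statement's English description precedes it below -/
import Mathlib

section
/- Let Π* ⊆ ℝ^q be a bounded set, and let Cone_B (for B ∈ [0,∞]) be as in the PMV-instability setting. If Π* ⊆ Cone_∞, then there exists a finite B* ≥ 0 with Π* ⊆ Cone_{B*}; consequently B⁻_{Π*} := inf{B ≥ 0 : Π* ⊆ Cone_B} is finite. -/
open Finset

lemma pair_div_le {p q : ℝ} (hp : 0 < p) (hq : 0 < q) (x y u v : ℝ)
    (h : x / p + y / q ≤ u / p + v / q) : x * q + p * y ≤ u * q + p * v := by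
  rw [div_add_div _ _ hp.ne' hq.ne', div_add_div _ _ hp.ne' hq.ne',
    div_le_div_iff₀ (mul_pos hp hq) (mul_pos hp hq)] at h
  nlinarith [mul_pos hp hq]

/-- Fourier–Motzkin: feasible systems `N·o ≤ b`, `o ≥ 0` with `|b| ≤ R` admit
solutions bounded by a constant depending only on `N` and `R`. -/
lemma fm_bound : ∀ (k : ℕ) (ι : Type) [Fintype ι] (N : ι → Fin k → ℝ) (R : ℝ),
    ∃ T : ℝ, 0 ≤ T ∧ ∀ b : ι → ℝ, (∀ i, |b i| ≤ R) →
      (∃ o : Fin k → ℝ, (∀ j, 0 ≤ o j) ∧ ∀ i, ∑ j, N i j * o j ≤ b i) →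
      ∃ o : Fin k → ℝ, (∀ j, 0 ≤ o j) ∧ (∀ i, ∑ j, N i j * o j ≤ b i) ∧ ∀ j, o j ≤ T := by
  intro k
  induction k with
  | zero =>
    intro ι _ N R
    exact ⟨0, le_refl _, fun b _ ⟨o, ho, hfeas⟩ => ⟨o, ho, hfeas, fun j => j.elim0⟩⟩
  | succ k ih =>
    intro ι _ N R
    set a : ι → ℝ := fun i => N i (Fin.last k) with ha
    set N₀ : ι → Fin k → ℝ := fun i j => N i j.castSucc with hN₀
    set N' : ι ⊕ ι × ι → Fin k → ℝ := fun s => match s with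
      | .inl i => if 0 ≤ a i then N₀ i else 0
      | .inr (i, j) => if a i < 0 ∧ 0 < a j then
          (fun l => N₀ i l / (-a i) + N₀ j l / a j) else 0 with hN'
    set G : ℝ := ∑ i, |a i|⁻¹ with hG
    have hG0 : 0 ≤ G := Finset.sum_nonneg fun i _ => by positivity
    have hGle : ∀ i, |a i|⁻¹ ≤ G := by
      intro i; rw [hG]
      exact Finset.single_le_sum (f := fun i => |a i|⁻¹) (fun i _ => by positivity) (mem_univ i)
    set R' : ℝ := |R| + 2 * G * |R| with hR'
    obtain ⟨T₀, hT₀, hind⟩ := ih (ι ⊕ ι × ι) N' R'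
    set S : ℝ := ∑ i, ∑ j, |N₀ i j| with hS
    have hS0 : 0 ≤ S := Finset.sum_nonneg fun i _ => Finset.sum_nonneg fun j _ => abs_nonneg _
    have hSle : ∀ i, ∑ j, |N₀ i j| ≤ S := by
      intro i; rw [hS]
      exact Finset.single_le_sum (f := fun i => ∑ j, |N₀ i j|)
        (fun i _ => Finset.sum_nonneg fun j _ => abs_nonneg _) (mem_univ i)
    set T₁ : ℝ := (S * T₀ + |R|) * G with hT₁
    have hT₁0 : 0 ≤ T₁ := by positivity
    refine ⟨max T₀ T₁, le_max_of_le_left hT₀, fun b hb ⟨o, ho, hfeas⟩ => ?_⟩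
    -- decompose the given feasible `o`
    have hsum : ∀ (i : ι) (v : Fin (k+1) → ℝ),
        ∑ j, N i j * v j = (∑ j, N₀ i j * v j.castSucc) + a i * v (Fin.last k) := by
      intro i v
      rw [Fin.sum_univ_castSucc]
    -- reduced right-hand side
    set b' : ι ⊕ ι × ι → ℝ := fun s => match s with
      | .inl i => if 0 ≤ a i then b i else 0
      | .inr (i, j) => if a i < 0 ∧ 0 < a j then b i / (-a i) + b j / a j else 0 with hb'
    have habsR : ∀ i, |b i| ≤ |R| := fun i => (hb i).trans (le_abs_self R)
    have hb'R : ∀ s, |b' s| ≤ R' := by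
      rintro (i | ⟨i, j⟩)
      · simp only [hb']
        split
        · calc |b i| ≤ |R| := habsR i
            _ ≤ R' := by rw [hR']; nlinarith [hG0, abs_nonneg R]
        · rw [abs_zero, hR']; positivity
      · simp only [hb']
        split
        · rename_i h
          have h1 : |b i / (-a i)| ≤ |R| * G := by
            rw [abs_div, abs_neg, div_eq_mul_inv]
            exact mul_le_mul (habsR i) (hGle i) (by positivity) (abs_nonneg R)
          have h2 : |b j / a j| ≤ |R| * G := by
            rw [abs_div, div_eq_mul_inv]
            exact mul_le_mul (habsR j) (hGle j) (by positivity) (abs_nonneg R)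
          calc |b i / (-a i) + b j / a j| ≤ |b i / (-a i)| + |b j / a j| := abs_add_le _ _
            _ ≤ |R| * G + |R| * G := add_le_add h1 h2
            _ ≤ R' := by rw [hR']; nlinarith [hG0, abs_nonneg R]
        · rw [abs_zero, hR']; positivity
    -- the reduced system is feasible (witnessed by the truncation of `o`)
    have hred : ∃ o₀ : Fin k → ℝ, (∀ j, 0 ≤ o₀ j) ∧ ∀ s, ∑ j, N' s j * o₀ j ≤ b' s := by
      refine ⟨fun j => o j.castSucc, fun j => ho _, ?_⟩
      rintro (i | ⟨i, j⟩)
      · simp only [hN', hb']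
        split
        · rename_i hai
          have := hfeas i
          rw [hsum i o] at this
          have hat : 0 ≤ a i * o (Fin.last k) := mul_nonneg hai (ho _)
          linarith
        · simp
      · simp only [hN', hb']
        split
        · rename_i hij
          obtain ⟨hi, hj⟩ := hij
          have h1 := hfeas i
          have h2 := hfeas j
          rw [hsum i o] at h1
          rw [hsum j o] at h2
          have hi' : 0 < -a i := by linarith
          -- divide and sum
          have e1 : (∑ l, N₀ i l * o l.castSucc) / (-a i) ≤ b i / (-a i) + o (Fin.last k) := by
            rw [div_le_iff₀ hi', add_mul, div_mul_cancel₀ _ hi'.ne']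
            nlinarith
          have e2 : (∑ l, N₀ j l * o l.castSucc) / (a j) ≤ b j / a j - o (Fin.last k) := by
            rw [div_le_iff₀ hj, sub_mul, div_mul_cancel₀ _ hj.ne']
            nlinarith
          have : ∑ l, (N₀ i l / (-a i) + N₀ j l / a j) * o l.castSucc
              = (∑ l, N₀ i l * o l.castSucc) / (-a i) + (∑ l, N₀ j l * o l.castSucc) / (a j) := by
            rw [Finset.sum_div, Finset.sum_div, ← Finset.sum_add_distrib]
            congr 1; ext l; ring
          rw [this]; linarith
        · simp
    obtain ⟨o₀, ho₀, hfeas₀, hbd₀⟩ := hind b' hb'R hred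
    -- choose the last coordinate
    set d : ι → ℝ := fun i => ∑ l, N₀ i l * o₀ l with hd
    set f : ι → ℝ := fun i => if a i < 0 then (d i - b i) / (-a i) else 0 with hf
    set t : ℝ := (insert (0:ℝ) (Finset.univ.image f)).max' (by simp) with ht
    have ht0 : 0 ≤ t := Finset.le_max' _ 0 (by simp)
    have htf : ∀ i, f i ≤ t := fun i => Finset.le_max' _ _ (by simp)
    have htle : ∀ {c : ℝ}, 0 ≤ c → (∀ i, f i ≤ c) → t ≤ c := by
      intro c hc hfc
      apply Finset.max'_le
      intro y hy
      simp only [Finset.mem_insert, Finset.mem_image, Finset.mem_univ, true_and] at hy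
      rcases hy with rfl | ⟨i, rfl⟩
      · exact hc
      · exact hfc i
    -- bounds on d
    have hdb : ∀ i, d i ≤ S * T₀ := by
      intro i
      calc d i ≤ ∑ l, |N₀ i l| * T₀ := by
            apply Finset.sum_le_sum
            intro l _
            calc N₀ i l * o₀ l ≤ |N₀ i l * o₀ l| := le_abs_self _
              _ = |N₀ i l| * o₀ l := by rw [abs_mul, abs_of_nonneg (ho₀ l)]
              _ ≤ |N₀ i l| * T₀ := mul_le_mul_of_nonneg_left (hbd₀ l) (abs_nonneg _)
        _ = (∑ l, |N₀ i l|) * T₀ := by rw [Finset.sum_mul]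
        _ ≤ S * T₀ := mul_le_mul_of_nonneg_right (hSle i) hT₀
    -- inl rows give d i ≤ b i when 0 ≤ a i
    have hinl : ∀ i, 0 ≤ a i → d i ≤ b i := by
      intro i hai
      have := hfeas₀ (Sum.inl i)
      simp only [hN', hb', if_pos hai] at this
      exact this
    -- t satisfies each upper bound from rows with a i > 0
    have htub : ∀ i, 0 < a i → t ≤ (b i - d i) / a i := by
      intro i hai
      apply htle
      · apply div_nonneg _ hai.le
        linarith [hinl i hai.le]
      · intro i'
        simp only [hf]
        split
        · rename_i hi'
          have := hfeas₀ (Sum.inr (i', i))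
          simp only [hN', hb', if_pos (⟨hi', hai⟩ : a i' < 0 ∧ 0 < a i)] at this
          have hsplit : ∑ l, (N₀ i' l / (-a i') + N₀ i l / a i) * o₀ l
              = d i' / (-a i') + d i / a i := by
            rw [hd, Finset.sum_div, Finset.sum_div, ← Finset.sum_add_distrib]
            congr 1; ext l; ring
          rw [hsplit] at this
          have hi'' : 0 < -a i' := by linarith
          have hkey := pair_div_le hi'' hai _ _ _ _ this
          rw [div_le_div_iff₀ hi'' hai]
          linarith
        · apply div_nonneg _ hai.le
          linarith [hinl i hai.le]
    -- bound on t
    have htT₁ : t ≤ T₁ := by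
      apply htle hT₁0
      intro i
      simp only [hf]
      split
      · rename_i hai
        have hAi : -a i = |a i| := by rw [abs_of_neg hai]
        rw [div_eq_mul_inv, hAi]
        rcases le_or_gt (d i - b i) 0 with h | h
        · exact (mul_nonpos_of_nonpos_of_nonneg h (by positivity)).trans hT₁0
        · rw [hT₁]
          apply mul_le_mul _ (hGle i) (by positivity) (by positivity)
          have := hdb i
          have := (abs_le.mp (habsR i)).1
          linarith
      · exact hT₁0
    -- assemble the solution
    refine ⟨Fin.snoc o₀ t, ?_, ?_, ?_⟩
    · intro j
      refine Fin.lastCases ?_ (fun j => ?_) j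
      · rw [Fin.snoc_last]; exact ht0
      · rw [Fin.snoc_castSucc]; exact ho₀ j
    · intro i
      rw [hsum i, Fin.snoc_last]
      have hrw : (∑ j, N₀ i j * (Fin.snoc o₀ t : Fin (k+1) → ℝ) j.castSucc) = d i := by
        simp only [Fin.snoc_castSucc]; rfl
      rw [hrw]
      rcases lt_trichotomy (a i) 0 with hai | hai | hai
      · have := htf i
        simp only [hf, if_pos hai] at this
        rw [div_le_iff₀ (by linarith : (0:ℝ) < -a i)] at this
        nlinarith
      · rw [hai]; simpa using hinl i hai.ge
      · have := htub i hai
        rw [le_div_iff₀ hai] at this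
        linarith
    · intro j
      refine Fin.lastCases ?_ (fun j => ?_) j
      · rw [Fin.snoc_last]; exact le_max_of_le_right htT₁
      · rw [Fin.snoc_castSucc]; exact le_max_of_le_left (hbd₀ j)



open Matrix

/-- `Cone_B` of the PMV-instability setting. -/
def coneB {q k mS mT : ℕ} (AS : Matrix (Fin mS) (Fin q) ℝ) (AT : Matrix (Fin mT) (Fin q) ℝ)
    (M : Matrix (Fin k) (Fin q) ℝ) (c : Fin k → ℝ) (B : ℝ) : Set (Fin q → ℝ) :=
  {x | AS.mulVec x ≤ 0 ∧
    ∃ o : Fin k → ℝ, (∀ i, 0 ≤ o i) ∧ c ⬝ᵥ o ≤ B ∧ AT.mulVec (x + Matrix.vecMul o M) ≤ 0}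

/-- `Cone_∞` of the PMV-instability setting (no budget constraint). -/
def coneInfty {q k mS mT : ℕ} (AS : Matrix (Fin mS) (Fin q) ℝ) (AT : Matrix (Fin mT) (Fin q) ℝ)
    (M : Matrix (Fin k) (Fin q) ℝ) : Set (Fin q → ℝ) :=
  {x | AS.mulVec x ≤ 0 ∧
    ∃ o : Fin k → ℝ, (∀ i, 0 ≤ o i) ∧ AT.mulVec (x + Matrix.vecMul o M) ≤ 0}

/-- If a bounded set `Π*` is contained in `Cone_∞`, then it is contained in `Cone_{B*}`
for some finite budget `B* ≥ 0`; consequently `B⁻_{Π*} = inf{B ≥ 0 : Π* ⊆ Cone_B}` is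
finite. -/
theorem stmt6 {q k mS mT : ℕ}
    (AS : Matrix (Fin mS) (Fin q) ℝ) (AT : Matrix (Fin mT) (Fin q) ℝ)
    (M : Matrix (Fin k) (Fin q) ℝ)
    (c : Fin k → ℝ) (hc : ∀ i, 0 < c i)
    (Ps : Set (Fin q → ℝ)) (hbdd : Bornology.IsBounded Ps)
    (hsub : Ps ⊆ coneInfty AS AT M) :
    ∃ B : ℝ, 0 ≤ B ∧ Ps ⊆ coneB AS AT M c B := by
  obtain ⟨R0, hR0⟩ := isBounded_iff_forall_norm_le.mp hbdd
  set N : Fin mT → Fin k → ℝ := fun i l => ∑ j, AT i j * M l j with hN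
  set R : ℝ := (∑ i, ∑ j, |AT i j|) * max R0 0 with hR
  -- key rewriting
  have hkey : ∀ (x : Fin q → ℝ) (o : Fin k → ℝ) (i : Fin mT),
      AT.mulVec (x + Matrix.vecMul o M) i = AT.mulVec x i + ∑ l, N i l * o l := by
    intro x o i
    simp only [mulVec, vecMul, dotProduct, Pi.add_apply, mul_add, Finset.sum_add_distrib, hN,
      Finset.sum_mul, Finset.mul_sum]
    congr 1
    rw [Finset.sum_comm]
    congr 1; ext j; congr 1; ext l; ring
  obtain ⟨T, hT, hfm⟩ := fm_bound k (Fin mT) N R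
  refine ⟨T * ∑ l, c l, mul_nonneg hT (Finset.sum_nonneg fun l _ => (hc l).le), ?_⟩
  intro x hx
  obtain ⟨hAS, o, ho, hfeas⟩ := hsub hx
  have hbR : ∀ i, |(-(AT.mulVec x)) i| ≤ R := by
    intro i
    simp only [Pi.neg_apply, abs_neg, mulVec, dotProduct]
    calc |∑ j, AT i j * x j| ≤ ∑ j, |AT i j * x j| := Finset.abs_sum_le_sum_abs _ _
      _ ≤ ∑ j, |AT i j| * max R0 0 := by
          apply Finset.sum_le_sum
          intro j _
          rw [abs_mul]
          apply mul_le_mul_of_nonneg_left _ (abs_nonneg _)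
          calc |x j| ≤ ‖x‖ := by rw [← Real.norm_eq_abs]; exact norm_le_pi_norm x j
            _ ≤ R0 := hR0 x hx
            _ ≤ max R0 0 := le_max_left _ _
      _ = (∑ j, |AT i j|) * max R0 0 := by rw [Finset.sum_mul]
      _ ≤ R := by
          rw [hR]
          apply mul_le_mul_of_nonneg_right _ (le_max_right _ _)
          exact Finset.single_le_sum (f := fun i => ∑ j, |AT i j|)
            (fun i _ => Finset.sum_nonneg fun j _ => abs_nonneg _) (Finset.mem_univ i)
  obtain ⟨o', ho', hfeas', hbd'⟩ := hfm (-(AT.mulVec x)) hbR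
    ⟨o, ho, fun i => by
      have := hfeas
      have h := this i
      rw [hkey x o i] at h
      simp only [Pi.zero_apply, Pi.neg_apply] at h ⊢
      linarith [h]⟩
  refine ⟨hAS, o', ho', ?_, ?_⟩
  · calc c ⬝ᵥ o' = ∑ l, c l * o' l := rfl
      _ ≤ ∑ l, c l * T := Finset.sum_le_sum fun l _ =>
          mul_le_mul_of_nonneg_left (hbd' l) (hc l).le
      _ = T * ∑ l, c l := by rw [← Finset.sum_mul, mul_comm]
  · intro i
    rw [hkey x o' i]
    have := hfeas' i
    simp only [Pi.neg_apply] at this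
    simp only [Pi.zero_apply]
    linarith
end

section
/- Let P₀ ⊆ ℝ^q be a linear subspace, and let p₁, …, p_k ∈ ℝ^q be vectors such that {p₁, …, p_k} together with P₀ are linearly independent (i.e., no nonzero linear combination of p₁,…,p_k lies in P₀). Let L = {Σᵢ ηᵢ pᵢ : ηᵢ ∈ ℤ, not all zero}. Then inf{‖x − y‖_∞ : x ∈ L, y ∈ P₀} > 0. -/
/-- Let `P₀ ⊆ ℝ^q` be a linear subspace and `p₁, …, p_k` vectors linearly independent
from `P₀` (no nonzero real combination lies in `P₀`). Then the nonzero integer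
combinations of the `pᵢ` are bounded away from `P₀` in sup norm:
`inf{‖x − y‖_∞ : x ∈ L, y ∈ P₀} > 0` where `L` is the lattice generated by the `pᵢ`
excluding `0`. -/
theorem stmt8 {q k : ℕ} (P₀ : Submodule ℝ (Fin q → ℝ)) (p : Fin k → (Fin q → ℝ))
    (hind : ∀ η : Fin k → ℝ, (∑ i, η i • p i) ∈ P₀ → η = 0) :
    ∃ C : ℝ, 0 < C ∧ ∀ η : Fin k → ℤ, η ≠ 0 → ∀ y ∈ P₀,
      C ≤ ‖(∑ i, (η i : ℝ) • p i) - y‖ := by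
  haveI : IsClosed (P₀ : Set (Fin q → ℝ)) := Submodule.closed_of_finiteDimensional P₀
  set T : (Fin k → ℝ) →ₗ[ℝ] ((Fin q → ℝ) ⧸ P₀) :=
    P₀.mkQ.comp (Fintype.linearCombination ℝ p) with hT
  have hTapp : ∀ η : Fin k → ℝ, T η = P₀.mkQ (∑ i, η i • p i) := by
    intro η
    simp [hT, Fintype.linearCombination_apply]
  have hinj : Function.Injective T := by
    rw [← LinearMap.ker_eq_bot, LinearMap.ker_eq_bot']
    intro η hη
    apply hind
    rw [hTapp] at hη
    exact (Submodule.Quotient.mk_eq_zero P₀).mp hη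
  let e := LinearEquiv.ofInjective T hinj
  letI : SeminormedAddCommGroup (LinearMap.range T) := Submodule.seminormedAddCommGroup _
  letI : NormedSpace ℝ (LinearMap.range T) := Submodule.normedSpace _
  let f : (LinearMap.range T) →L[ℝ] (Fin k → ℝ) :=
    LinearMap.toContinuousLinearMap e.symm.toLinearMap
  set C := max ‖f‖ 1 with hC
  have hC1 : (1:ℝ) ≤ C := le_max_right _ _
  have hC0 : (0:ℝ) < C := lt_of_lt_of_le one_pos hC1
  refine ⟨1 / C, by positivity, ?_⟩
  intro η hη y hy
  set x : Fin q → ℝ := ∑ i, (η i : ℝ) • p i with hx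
  have hbound : ∀ v : Fin k → ℝ, ‖v‖ ≤ C * ‖T v‖ := by
    intro v
    have : ‖f (e v)‖ ≤ ‖f‖ * ‖e v‖ := f.le_opNorm _
    have he : f (e v) = v := by
      simp [f, e, LinearEquiv.symm_apply_apply]
    have hev : ‖e v‖ = ‖T v‖ := rfl
    rw [he, hev] at this
    exact this.trans (mul_le_mul_of_nonneg_right (le_max_left _ _) (norm_nonneg _))
  have hηℝ : (1:ℝ) ≤ ‖fun i => (η i : ℝ)‖ := by
    obtain ⟨i, hi⟩ := Function.ne_iff.mp hη
    calc (1:ℝ) ≤ |(η i : ℝ)| := by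
            rw [← Int.cast_abs]; exact_mod_cast Int.one_le_abs hi
      _ ≤ ‖fun i => (η i : ℝ)‖ := by
            have := norm_le_pi_norm (fun i => (η i : ℝ)) i
            simpa using this
  have hTx : ‖T (fun i => (η i : ℝ))‖ ≤ ‖x - y‖ := by
    rw [hTapp]
    have : P₀.mkQ (∑ i, (η i : ℝ) • p i) = P₀.mkQ (x - y) := by
      have h0 : P₀.mkQ y = 0 := (Submodule.Quotient.mk_eq_zero P₀).mpr hy
      rw [map_sub, h0, sub_zero]
    rw [this]
    exact Submodule.Quotient.norm_mk_le _ _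
  have := (hbound (fun i => (η i : ℝ))).trans (mul_le_mul_of_nonneg_left hTx hC0.le)
  have h1 : 1 ≤ C * ‖x - y‖ := hηℝ.trans this
  rw [div_le_iff₀ hC0, mul_comm] at *
  linarith [h1]
end

section
/- Consider the PMV-instability setting with integer constraint matrices. Suppose the set of unstable integer histograms S_{n,B} = {x ∈ H_S ∩ ℤ_{≥0}^q : x·1 = n, ∃ o ∈ ℤ_{≥0}^{|O|}, c·o ≤ B, x + oᵀM_O ∈ H_T} is nonempty. Then there exists a constant C′ (independent of n and B) such that for every real vector x ∈ H_{B,n} ∩ ℝ_{≥0}^q (the fractional relaxation: x ∈ H_S, x·1 = n, x ≥ 0, and ∃ o ∈ ℝ_{≥0}^{|O|} with c·o ≤ B and x + oᵀM_O ∈ H_T), there exists an integer vector x′ ∈ S_{n,B} with ‖x − x′‖_∞ < C′. -/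
open Matrix

set_option linter.unusedSectionVars false
set_option maxHeartbeats 1000000

namespace Stmt10

variable {J : Type} [Fintype J] [DecidableEq J]

def dotI (a g : J → ℤ) : ℤ := ∑ j, a j * g j
def dotR (a : J → ℤ) (x : J → ℝ) : ℝ := ∑ j, (a j : ℝ) * x j
def castVec (g : J → ℤ) : J → ℝ := fun j => (g j : ℝ)

lemma dotR_castVec (a g : J → ℤ) : dotR a (castVec g) = (dotI a g : ℝ) := by
  simp [dotR, dotI, castVec]

lemma dotR_sum {ι : Type*} (a : J → ℤ) (S : Finset ι) (f : ι → (J → ℝ)) :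
    dotR a (∑ t ∈ S, f t) = ∑ t ∈ S, dotR a (f t) := by
  unfold dotR
  rw [Finset.sum_comm]
  congr 1; ext j
  simp [Finset.mul_sum, Finset.sum_apply]

lemma dotR_smul (a : J → ℤ) (c : ℝ) (x : J → ℝ) : dotR a (c • x) = c * dotR a x := by
  simp [dotR, Finset.mul_sum]; congr 1; ext j; ring

lemma dotI_zero (a : J → ℤ) : dotI a 0 = 0 := by simp [dotI]

lemma dotI_combo (a g h : J → ℤ) (cg ch : ℤ) :
    dotI a (cg • g + ch • h) = cg * dotI a g + ch * dotI a h := by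
  simp [dotI, Finset.mul_sum, mul_add, Finset.sum_add_distrib]
  congr 1 <;> (congr 1; ext j; ring)

lemma alg {ι : Type} [Fintype ι] (lam d w : ι → ℝ) (P N : ι → Prop)
    [DecidablePred P] [DecidablePred N] (hdisj : ∀ t, P t → ¬ N t)
    (T s : ℝ) (hT : T ≠ 0)
    (hTdef : ∑ t ∈ Finset.univ.filter N, lam t * (-(d t)) = T)
    (hsdef : ∑ t ∈ Finset.univ.filter P, lam t * d t = s) :
    ∑ t, lam t * w t =
      (∑ t, (if N t then lam t * (1 - s / T) else if P t then 0 else lam t) * w t)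
      + ∑ t, ∑ u, (if P t ∧ N u then lam t * lam u / T else 0)
          * ((-(d u)) * w t + d t * w u) := by
  classical
  set W := ∑ u ∈ Finset.univ.filter N, lam u * w u with hW
  have hrow : ∀ t, (∑ u, (if P t ∧ N u then lam t * lam u / T else 0)
        * ((-(d u)) * w t + d t * w u))
      = if P t then lam t * w t + (lam t * d t) * (W / T) else 0 := by
    intro t
    by_cases hPt : P t
    · simp only [hPt, true_and, if_true]
      have hterm : ∀ u, (if N u then lam t * lam u / T else 0) * ((-(d u)) * w t + d t * w u)
          = (if N u then (lam t / T * w t) * (lam u * (-(d u)))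
              + (lam t * d t / T) * (lam u * w u) else 0) := by
        intro u; by_cases hNu : N u <;> simp [hNu]
        ring
      rw [Finset.sum_congr rfl (fun u _ => hterm u), ← Finset.sum_filter,
        Finset.sum_add_distrib, ← Finset.mul_sum, ← Finset.mul_sum, hTdef, ← hW]
      field_simp
    · simp [hPt]
  rw [Finset.sum_congr rfl (fun t _ => hrow t), ← Finset.sum_filter,
    Finset.sum_add_distrib, ← Finset.sum_mul, hsdef]
  have hsplit1 : (∑ t, (if N t then lam t * (1 - s / T) else if P t then 0 else lam t) * w t)
      = (∑ t ∈ Finset.univ.filter N, (lam t * (1 - s / T)) * w t)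
        + ∑ t ∈ Finset.univ.filter (fun t => ¬ N t), (if P t then 0 else lam t) * w t := by
    rw [← Finset.sum_filter_add_sum_filter_not Finset.univ N]
    congr 1
    · exact Finset.sum_congr rfl (fun t ht => by
        simp only [Finset.mem_filter] at ht; simp [ht.2])
    · exact Finset.sum_congr rfl (fun t ht => by
        simp only [Finset.mem_filter] at ht; simp [ht.2])
  have hsplit2 : (∑ t ∈ Finset.univ.filter (fun t => ¬ N t), (if P t then 0 else lam t) * w t)
      = ∑ t ∈ (Finset.univ.filter (fun t => ¬ N t)).filter (fun t => ¬ P t), lam t * w t := by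
    rw [← Finset.sum_filter_add_sum_filter_not (Finset.univ.filter (fun t => ¬ N t)) P]
    have h0 : (∑ t ∈ (Finset.univ.filter (fun t => ¬ N t)).filter P,
        (if P t then 0 else lam t) * w t) = 0 := by
      apply Finset.sum_eq_zero; intro t ht
      simp only [Finset.mem_filter] at ht; simp [ht.2]
    rw [h0, zero_add]
    exact Finset.sum_congr rfl (fun t ht => by
      simp only [Finset.mem_filter] at ht
      rw [if_neg ht.2])
  have hNW : (∑ t ∈ Finset.univ.filter N, (lam t * (1 - s / T)) * w t)
      = W - s * (W / T) := by
    have h : ∀ t, (lam t * (1 - s / T)) * w t = lam t * w t - (s/T) * (lam t * w t) := by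
      intro t; ring
    rw [Finset.sum_congr rfl (fun t _ => h t), Finset.sum_sub_distrib, ← Finset.mul_sum, ← hW]
    ring
  have hPfil : (Finset.univ.filter (fun t => ¬ N t)).filter P = Finset.univ.filter P := by
    ext t
    simp only [Finset.mem_filter, Finset.mem_univ, true_and]
    exact ⟨fun h => h.2, fun h => ⟨hdisj t h, h⟩⟩
  have hLHS : (∑ t, lam t * w t)
      = W + ((∑ t ∈ Finset.univ.filter P, lam t * w t)
        + ∑ t ∈ (Finset.univ.filter (fun t => ¬ N t)).filter (fun t => ¬ P t),
            lam t * w t) := by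
    rw [← Finset.sum_filter_add_sum_filter_not Finset.univ N (fun t => lam t * w t), ← hW]
    congr 1
    rw [← Finset.sum_filter_add_sum_filter_not (Finset.univ.filter (fun t => ¬ N t)) P
      (fun t => lam t * w t), hPfil]
  rw [hsplit1, hsplit2, hNW, hLHS]
  ring

lemma cone_gen (L : List (J → ℤ)) :
    ∃ (ι : Type) (_ : Fintype ι) (g : ι → (J → ℤ)),
      (∀ t, ∀ a ∈ L, dotI a (g t) ≤ 0) ∧
      (∀ x : J → ℝ, (∀ a ∈ L, dotR a x ≤ 0) →
        ∃ lam : ι → ℝ, (∀ t, 0 ≤ lam t) ∧ x = ∑ t, lam t • castVec (g t)) := by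
  classical
  induction L with
  | nil =>
      refine ⟨J × Bool, inferInstance,
        fun p => Pi.single p.1 (if p.2 then 1 else -1), ?_, ?_⟩
      · intro t a ha; simp at ha
      · intro x _
        refine ⟨fun p => if p.2 then max (x p.1) 0 else max (-(x p.1)) 0, ?_, ?_⟩
        · intro p; by_cases h : p.2 <;> simp [h, le_max_right]
        · funext j
          rw [Finset.sum_apply, Fintype.sum_prod_type]
          simp only [Pi.smul_apply, smul_eq_mul, castVec, Pi.single_apply, Fintype.sum_bool,
            if_true, if_false]
          push_cast
          have hterm : ∀ j' ∈ (Finset.univ : Finset J),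
              max (x j') 0 * (if j = j' then (1:ℝ) else 0)
                + max (-(x j')) 0 * (if j = j' then (-1:ℝ) else 0)
              = if j = j' then x j' else 0 := by
            intro j' _
            by_cases h : j = j'
            · simp only [h, if_true]
              have := max_zero_sub_max_neg_zero_eq_self (x j')
              linarith [this]
            · simp [h]
          rw [Finset.sum_congr rfl hterm]
          simp
  | cons a L ih =>
      obtain ⟨ι, hfin, g, hIn, hGen⟩ := ih
      letI := hfin
      set dI : ι → ℤ := fun t => dotI a (g t) with hdIdef
      set g' : ι ⊕ ι × ι → (J → ℤ) := Sum.elim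
          (fun t => if dI t ≤ 0 then g t else 0)
          (fun p => if 0 < dI p.1 ∧ dI p.2 < 0
              then (-(dI p.2)) • g p.1 + (dI p.1) • g p.2 else 0) with hg'def
      refine ⟨ι ⊕ ι × ι, inferInstance, g', ?_, ?_⟩
      · rintro (t | ⟨t, u⟩) b hb
        · simp only [hg'def, Sum.elim_inl]
          by_cases h : dI t ≤ 0
          · rw [if_pos h]
            rcases List.mem_cons.mp hb with rfl | hbL
            · exact h
            · exact hIn t b hbL
          · rw [if_neg h, dotI_zero]
        · simp only [hg'def, Sum.elim_inr]
          by_cases h : 0 < dI t ∧ dI u < 0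
          · rw [if_pos h, dotI_combo]
            have et : dotI b (g t) = dI t ∨ dotI b (g t) ≤ 0 := by
              rcases List.mem_cons.mp hb with rfl | hbL
              · exact Or.inl rfl
              · exact Or.inr (hIn t b hbL)
            rcases List.mem_cons.mp hb with rfl | hbL
            · have ht' : dotI b (g t) = dI t := rfl
              have hu' : dotI b (g u) = dI u := rfl
              rw [ht', hu']
              exact le_of_eq (by ring)
            · nlinarith [hIn t b hbL, hIn u b hbL, h.1, h.2]
          · rw [if_neg h, dotI_zero]
      · intro x hx
        have hax : dotR a x ≤ 0 := hx a List.mem_cons_self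
        have hxL : ∀ b ∈ L, dotR b x ≤ 0 := fun b hb => hx b (List.mem_cons_of_mem a hb)
        obtain ⟨lam, hlam0, hlamx⟩ := hGen x hxL
        set d : ι → ℝ := fun t => ((dI t : ℤ) : ℝ) with hddef
        set s : ℝ := ∑ t ∈ Finset.univ.filter (fun t => 0 < dI t), lam t * d t with hsdef
        set T : ℝ := ∑ t ∈ Finset.univ.filter (fun t => dI t < 0), lam t * (-(d t)) with hTdef
        have hs0 : 0 ≤ s := Finset.sum_nonneg (fun t ht => by
          simp only [Finset.mem_filter] at ht
          have hd : (0:ℝ) ≤ d t := by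
            simp only [hddef]; exact_mod_cast le_of_lt ht.2
          exact mul_nonneg (hlam0 t) hd)
        have hT0 : 0 ≤ T := Finset.sum_nonneg (fun t ht => by
          simp only [Finset.mem_filter] at ht
          have hd : (0:ℝ) ≤ -(d t) := by
            have : (d t : ℝ) ≤ 0 := by simp only [hddef]; exact_mod_cast le_of_lt ht.2
            linarith
          exact mul_nonneg (hlam0 t) hd)
        have hsum : ∑ t, lam t * d t = dotR a x := by
          rw [hlamx, dotR_sum]
          exact (Finset.sum_congr rfl (fun t _ => by
            rw [dotR_smul, dotR_castVec])).symm
        have hsT : s ≤ T := by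
          have hsplit : ∑ t, lam t * d t = s - T := by
            rw [← Finset.sum_filter_add_sum_filter_not Finset.univ (fun t => 0 < dI t)
              (fun t => lam t * d t), ← hsdef]
            have hPfil : (Finset.univ.filter (fun t => ¬ 0 < dI t)).filter (fun t => dI t < 0)
                = Finset.univ.filter (fun t => dI t < 0) := by
              ext t
              simp only [Finset.mem_filter, Finset.mem_univ, true_and]
              exact ⟨fun h => h.2, fun h => ⟨by linarith, h⟩⟩
            rw [← Finset.sum_filter_add_sum_filter_not
              (Finset.univ.filter (fun t => ¬ 0 < dI t)) (fun t => dI t < 0)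
              (fun t => lam t * d t), hPfil]
            have hzero : (∑ t ∈ (Finset.univ.filter (fun t => ¬ 0 < dI t)).filter
                (fun t => ¬ dI t < 0), lam t * d t) = 0 := by
              apply Finset.sum_eq_zero; intro t ht
              simp only [Finset.mem_filter] at ht
              have : dI t = 0 := by omega
              simp [hddef, this]
            rw [hzero, add_zero]
            have : (∑ t ∈ Finset.univ.filter (fun t => dI t < 0), lam t * d t) = -T := by
              rw [hTdef, ← Finset.sum_neg_distrib]
              exact Finset.sum_congr rfl (fun t _ => by ring)
            rw [this]; ring
          have hst0 : s - T ≤ 0 := by rw [← hsplit, hsum]; exact hax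
          linarith
        by_cases hTz : T = 0
        · -- degenerate case: s = 0, all positive-direction coefficients vanish
          have hsz : s = 0 := le_antisymm (hTz ▸ hsT) hs0
          have hseq : (∑ t ∈ Finset.univ.filter (fun t => 0 < dI t), lam t * d t) = 0 := by
            rw [← hsdef]; exact hsz
          have hlamP : ∀ t, 0 < dI t → lam t = 0 := by
            intro t ht
            have hmem : t ∈ Finset.univ.filter (fun t => 0 < dI t) := by
              simp [ht]
            have hnonneg : ∀ u ∈ Finset.univ.filter (fun t => 0 < dI t), 0 ≤ lam u * d u := by
              intro u hu
              simp only [Finset.mem_filter] at hu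
              have hd : (0:ℝ) ≤ d u := by
                simp only [hddef]; exact_mod_cast le_of_lt hu.2
              exact mul_nonneg (hlam0 u) hd
            have h0 : lam t * d t = 0 :=
              (Finset.sum_eq_zero_iff_of_nonneg hnonneg).mp hseq t hmem
            have hd : (0:ℝ) < d t := by simp only [hddef]; exact_mod_cast ht
            rcases mul_eq_zero.mp h0 with h | h
            · exact h
            · exact absurd h (ne_of_gt hd)
          refine ⟨Sum.elim lam (fun _ => 0), ?_, ?_⟩
          · rintro (t | p)
            · exact hlam0 t
            · exact le_refl 0
          · rw [Fintype.sum_sum_type]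
            have hinr : ∑ p : ι × ι, Sum.elim lam (fun _ => (0:ℝ)) (Sum.inr p)
                • castVec (g' (Sum.inr p)) = 0 := by
              apply Finset.sum_eq_zero; intro p _; simp
            rw [hinr, add_zero, hlamx]
            apply Finset.sum_congr rfl
            intro t _
            by_cases h : dI t ≤ 0
            · simp only [hg'def, Sum.elim_inl, h, if_true]
            · have : lam t = 0 := hlamP t (by omega)
              simp [this]
        · -- main case: use the algebraic identity
          have hTpos : 0 < T := lt_of_le_of_ne hT0 (Ne.symm hTz)
          refine ⟨Sum.elim
              (fun t => if dI t < 0 then lam t * (1 - s / T) else if 0 < dI t then 0 else lam t)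
              (fun p => if 0 < dI p.1 ∧ dI p.2 < 0 then lam p.1 * lam p.2 / T else 0),
            ?_, ?_⟩
          · rintro (t | p)
            · simp only [Sum.elim_inl]
              by_cases h1 : dI t < 0
              · simp only [h1, if_true]
                have : s / T ≤ 1 := (div_le_one hTpos).mpr hsT
                have := hlam0 t
                nlinarith
              · by_cases h2 : 0 < dI t <;> simp [h1, h2, hlam0 t]
            · simp only [Sum.elim_inr]
              by_cases h : 0 < dI p.1 ∧ dI p.2 < 0 <;> simp [h]
              exact div_nonneg (mul_nonneg (hlam0 p.1) (hlam0 p.2)) (le_of_lt hTpos)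
          · funext j
            have hxj : x j = ∑ t, lam t * ((g t j : ℤ) : ℝ) := by
              rw [hlamx, Finset.sum_apply]
              exact Finset.sum_congr rfl (fun t _ => by simp [castVec])
            rw [Finset.sum_apply, Fintype.sum_sum_type]
            have key := alg lam d (fun t => ((g t j : ℤ) : ℝ))
              (fun t => 0 < dI t) (fun t => dI t < 0)
              (fun t hP hN => by omega) T s hTz hTdef.symm hsdef.symm
            rw [hxj, key]
            congr 1
            · apply Finset.sum_congr rfl
              intro t _
              simp only [Sum.elim_inl, Pi.smul_apply, smul_eq_mul, hg'def]
              by_cases h1 : dI t < 0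
              · have h2 : dI t ≤ 0 := le_of_lt h1
                simp [h1, h2, castVec]
              · by_cases h2 : 0 < dI t
                · have h3 : ¬ dI t ≤ 0 := by omega
                  simp [h1, h2, h3, castVec]
                · have h3 : dI t ≤ 0 := by omega
                  simp [h1, h2, h3, castVec]
            · rw [Fintype.sum_prod_type]
              apply Finset.sum_congr rfl
              intro t _
              apply Finset.sum_congr rfl
              intro u _
              simp only [Sum.elim_inr, Pi.smul_apply, smul_eq_mul, hg'def]
              by_cases h : 0 < dI t ∧ dI u < 0
              · simp only [h, if_true, and_true, true_and]
                have : castVec ((-(dI u)) • g t + (dI t) • g u) j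
                    = (-(d u)) * ((g t j : ℤ) : ℝ) + d t * ((g u j : ℤ) : ℝ) := by
                  simp only [castVec, Pi.add_apply, Pi.smul_apply, smul_eq_mul, hddef]
                  push_cast
                  ring
                rw [this]
              · simp [h, castVec]

lemma dotI_neg_left (a g : J → ℤ) : dotI (-a) g = -(dotI a g) := by
  simp [dotI]

lemma dotR_neg_left (a : J → ℤ) (x : J → ℝ) : dotR (-a) x = -(dotR a x) := by
  simp [dotR]

lemma dotR_add (a : J → ℤ) (x y : J → ℝ) : dotR a (x + y) = dotR a x + dotR a y := by
  simp [dotR, mul_add, Finset.sum_add_distrib]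

lemma cgst {I : Type} [Fintype I] (A : I → (J → ℤ)) :
    ∃ C : ℝ, 0 ≤ C ∧ ∀ (b : I → ℝ) (zstar : J → ℤ),
      (∀ i, dotR (A i) (castVec zstar) ≤ b i) →
      ∀ zhat : J → ℝ, (∀ i, dotR (A i) zhat ≤ b i) →
      ∃ z' : J → ℤ, (∀ i, dotR (A i) (castVec z') ≤ b i) ∧
        ∀ j, |zhat j - (z' j : ℝ)| ≤ C := by
  classical
  have hgen : ∀ σ : I → Bool, ∃ (ι : Type) (_ : Fintype ι) (g : ι → (J → ℤ)),
      (∀ t i, σ i = true → dotI (A i) (g t) ≤ 0) ∧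
      (∀ t i, σ i = false → 0 ≤ dotI (A i) (g t)) ∧
      (∀ x : J → ℝ,
        (∀ i, σ i = true → dotR (A i) x ≤ 0) →
        (∀ i, σ i = false → 0 ≤ dotR (A i) x) →
        ∃ lam : ι → ℝ, (∀ t, 0 ≤ lam t) ∧ x = ∑ t, lam t • castVec (g t)) := by
    intro σ
    obtain ⟨ι, hfin, g, h1, h2⟩ := cone_gen
      ((Finset.univ.toList (α := I)).map (fun i => if σ i then A i else -(A i)))
    have hmem : ∀ i : I, (if σ i then A i else -(A i)) ∈
        ((Finset.univ.toList (α := I)).map (fun i => if σ i then A i else -(A i))) :=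
      fun i => List.mem_map.mpr ⟨i, Finset.mem_toList.mpr (Finset.mem_univ i), rfl⟩
    refine ⟨ι, hfin, g, ?_, ?_, ?_⟩
    · intro t i hi
      have := h1 t _ (hmem i)
      rw [hi] at this
      simpa using this
    · intro t i hi
      have := h1 t _ (hmem i)
      rw [hi] at this
      simp only [Bool.false_eq_true, if_false, dotI_neg_left] at this
      linarith
    · intro x hx1 hx2
      apply h2
      intro a ha
      obtain ⟨i, _, rfl⟩ := List.mem_map.mp ha
      by_cases hi : σ i
      · rw [if_pos hi]; exact hx1 i hi
      · rw [if_neg hi]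
        rw [dotR_neg_left]
        have := hx2 i (Bool.eq_false_iff.mpr hi)
        linarith
  choose ι ifin g hpos hneg hdecomp using hgen
  set Cf : (I → Bool) → ℝ := fun σ =>
    letI := ifin σ
    ∑ t : ι σ, ∑ j : J, |((g σ t j : ℤ) : ℝ)| with hCf
  have hCf0 : ∀ σ, 0 ≤ Cf σ := by
    intro σ
    simp only [hCf]
    exact Finset.sum_nonneg fun t _ => Finset.sum_nonneg fun j _ => abs_nonneg _
  refine ⟨∑ σ : I → Bool, Cf σ, Finset.sum_nonneg fun σ _ => hCf0 σ, ?_⟩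
  intro b zstar hstar zhat hhat
  set w : J → ℝ := fun j => zhat j - (zstar j : ℝ) with hw
  set σ : I → Bool := fun i => decide (dotR (A i) w ≤ 0) with hσ
  letI := ifin σ
  obtain ⟨lam, hlam0, hlamw⟩ := hdecomp σ w
    (fun i hi => by
      have := of_decide_eq_true (hσ ▸ hi)
      exact this)
    (fun i hi => by
      have := of_decide_eq_false (hσ ▸ hi)
      linarith)
  refine ⟨fun j => zstar j + ∑ t, ⌊lam t⌋ * g σ t j, ?_, ?_⟩
  · intro i
    have hz' : castVec (fun j => zstar j + ∑ t, ⌊lam t⌋ * g σ t j)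
        = castVec zstar + ∑ t, ((⌊lam t⌋ : ℤ) : ℝ) • castVec (g σ t) := by
      funext j
      simp only [castVec, Pi.add_apply, Finset.sum_apply, Pi.smul_apply, smul_eq_mul]
      push_cast
      ring
    have hDz' : dotR (A i) (castVec (fun j => zstar j + ∑ t, ⌊lam t⌋ * g σ t j))
        = dotR (A i) (castVec zstar)
          + ∑ t, ((⌊lam t⌋ : ℤ) : ℝ) * ((dotI (A i) (g σ t) : ℤ) : ℝ) := by
      rw [hz', dotR_add, dotR_sum]
      congr 1
      exact Finset.sum_congr rfl fun t _ => by rw [dotR_smul, dotR_castVec]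
    have hwsum : dotR (A i) w = ∑ t, lam t * ((dotI (A i) (g σ t) : ℤ) : ℝ) := by
      rw [hlamw, dotR_sum]
      exact Finset.sum_congr rfl fun t _ => by rw [dotR_smul, dotR_castVec]
    by_cases hi : σ i
    · -- rows where the direction is nonpositive for all generators
      have hneg' : ∀ t, dotI (A i) (g σ t) ≤ 0 := fun t => hpos σ t i hi
      have : (∑ t, ((⌊lam t⌋ : ℤ) : ℝ) * ((dotI (A i) (g σ t) : ℤ) : ℝ)) ≤ 0 := by
        apply Finset.sum_nonpos
        intro t _
        apply mul_nonpos_of_nonneg_of_nonpos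
        · exact_mod_cast Int.floor_nonneg.mpr (hlam0 t)
        · exact_mod_cast hneg' t
      rw [hDz']
      linarith [hstar i]
    · -- rows where the direction is nonnegative for all generators
      have hposD : ∀ t, 0 ≤ dotI (A i) (g σ t) :=
        fun t => hneg σ t i (Bool.eq_false_iff.mpr hi)
      have hzhat : dotR (A i) zhat = dotR (A i) (castVec zstar) + dotR (A i) w := by
        rw [← dotR_add]
        congr 1
        funext j
        simp [hw, castVec]
      have hfrac : 0 ≤ ∑ t, (lam t - ((⌊lam t⌋ : ℤ) : ℝ))
          * ((dotI (A i) (g σ t) : ℤ) : ℝ) := by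
        apply Finset.sum_nonneg
        intro t _
        apply mul_nonneg
        · have := Int.floor_le (lam t); linarith
        · exact_mod_cast hposD t
      have hsub : (∑ t, (lam t - ((⌊lam t⌋ : ℤ) : ℝ)) * ((dotI (A i) (g σ t) : ℤ) : ℝ))
          = dotR (A i) w - ∑ t, ((⌊lam t⌋ : ℤ) : ℝ) * ((dotI (A i) (g σ t) : ℤ) : ℝ) := by
        rw [hwsum, ← Finset.sum_sub_distrib]
        exact Finset.sum_congr rfl fun t _ => by ring
      rw [hDz']
      have := hhat i
      rw [hzhat] at this
      linarith [hfrac, hsub ▸ hfrac]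
  · intro j
    have hdiff : zhat j - ((zstar j + ∑ t, ⌊lam t⌋ * g σ t j : ℤ) : ℝ)
        = ∑ t, (lam t - ((⌊lam t⌋ : ℤ) : ℝ)) * ((g σ t j : ℤ) : ℝ) := by
      have hwj : w j = ∑ t, lam t * ((g σ t j : ℤ) : ℝ) := by
        rw [hlamw, Finset.sum_apply]
        exact Finset.sum_congr rfl fun t _ => by simp [castVec]
      have hz : zhat j = (zstar j : ℝ) + w j := by simp [hw]
      have key : (∑ t, lam t * ((g σ t j : ℤ) : ℝ))
            - (∑ t, ((⌊lam t⌋ : ℤ) : ℝ) * ((g σ t j : ℤ) : ℝ))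
          = ∑ t, (lam t - ((⌊lam t⌋ : ℤ) : ℝ)) * ((g σ t j : ℤ) : ℝ) := by
        rw [← Finset.sum_sub_distrib]
        exact Finset.sum_congr rfl fun t _ => by ring
      rw [hz, hwj]
      push_cast
      linarith [key]
    rw [hdiff]
    calc |∑ t, (lam t - ((⌊lam t⌋ : ℤ) : ℝ)) * ((g σ t j : ℤ) : ℝ)|
        ≤ ∑ t, |(lam t - ((⌊lam t⌋ : ℤ) : ℝ)) * ((g σ t j : ℤ) : ℝ)| :=
          Finset.abs_sum_le_sum_abs _ _
      _ ≤ ∑ t, |((g σ t j : ℤ) : ℝ)| := by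
          apply Finset.sum_le_sum
          intro t _
          rw [abs_mul]
          have h1 : |lam t - ((⌊lam t⌋ : ℤ) : ℝ)| ≤ 1 := by
            have h2 := Int.floor_le (lam t)
            have h3 := Int.lt_floor_add_one (lam t)
            rw [abs_le]
            constructor <;> [linarith; linarith]
          nlinarith [abs_nonneg ((g σ t j : ℤ) : ℝ)]
      _ ≤ Cf σ := by
          simp only [hCf]
          apply Finset.sum_le_sum
          intro t _
          exact Finset.single_le_sum (f := fun j' => |((g σ t j' : ℤ) : ℝ)|)
            (fun j' _ => abs_nonneg _) (Finset.mem_univ j)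
      _ ≤ ∑ σ' : I → Bool, Cf σ' :=
          Finset.single_le_sum (fun σ' _ => hCf0 σ') (Finset.mem_univ σ)


lemma dotR_elim {q k : ℕ} (a1 : Fin q → ℤ) (a2 : Fin k → ℤ) (z : (Fin q ⊕ Fin k) → ℝ) :
    dotR (Sum.elim a1 a2) z
      = (∑ j, (a1 j : ℝ) * z (Sum.inl j)) + ∑ l, (a2 l : ℝ) * z (Sum.inr l) := by
  unfold dotR
  rw [Fintype.sum_sum_type]
  rfl

lemma sum_ite_neg {q : ℕ} (j0 : Fin q) (z : Fin q → ℝ) :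
    (∑ j, (((if j = j0 then (-1 : ℤ) else 0) : ℤ) : ℝ) * z j) = -(z j0) := by
  rw [Finset.sum_eq_single j0]
  · simp
  · intro j _ hj; simp [hj]
  · intro h; exact absurd (Finset.mem_univ j0) h


lemma rearr {q k mT : ℕ} {R : Type} [CommRing R] (AT : Fin mT → Fin q → R)
    (M : Fin k → Fin q → R) (y : Fin q → R) (u : Fin k → R) (i : Fin mT) :
    (∑ j, AT i j * (y j + ∑ l, u l * M l j))
      = (∑ j, AT i j * y j) + ∑ l, (∑ j, AT i j * M l j) * u l := by
  calc ∑ j, AT i j * (y j + ∑ l, u l * M l j)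
      = ∑ j, (AT i j * y j + ∑ l, AT i j * M l j * u l) := by
        apply Finset.sum_congr rfl; intro j _
        rw [mul_add, Finset.mul_sum]
        congr 1
        exact Finset.sum_congr rfl fun l _ => by ring
    _ = (∑ j, AT i j * y j) + ∑ j, ∑ l, AT i j * M l j * u l := Finset.sum_add_distrib
    _ = (∑ j, AT i j * y j) + ∑ l, ∑ j, AT i j * M l j * u l := by rw [Finset.sum_comm]
    _ = (∑ j, AT i j * y j) + ∑ l, (∑ j, AT i j * M l j) * u l := by
        congr 1
        exact Finset.sum_congr rfl fun l _ => by rw [Finset.sum_mul]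


end Stmt10

/-- Integer rounding for the PMV-instability setting (integral data). If the set of
unstable integer histograms `S_{n,B}` is nonempty, then there is a constant `C′`
(independent of `n` and `B`) such that every fractional point of `H_{B,n} ∩ ℝ_{≥0}^q`
is within sup-norm distance `< C′` of an integer point of `S_{n,B}`. -/
theorem stmt10 {q k mS mT : ℕ}
    (AS : Matrix (Fin mS) (Fin q) ℤ) (bS : Fin mS → ℤ)
    (AT : Matrix (Fin mT) (Fin q) ℤ) (bT : Fin mT → ℤ)
    (M : Matrix (Fin k) (Fin q) ℤ)
    (c : Fin k → ℤ) (hc : ∀ i, 0 < c i) :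
    ∃ C' : ℝ, ∀ (n : ℕ) (B : ℝ), 0 ≤ B →
      -- S_{n,B} is nonempty:
      (∃ x : Fin q → ℤ, (∀ i, 0 ≤ x i) ∧ AS.mulVec x ≤ bS ∧ (∑ i, x i) = (n : ℤ) ∧
        ∃ o : Fin k → ℤ, (∀ i, 0 ≤ o i) ∧ ((c ⬝ᵥ o : ℤ) : ℝ) ≤ B ∧
          AT.mulVec (x + Matrix.vecMul o M) ≤ bT) →
      -- for every fractional solution x:
      ∀ x : Fin q → ℝ, (∀ i, 0 ≤ x i) →
        (AS.map (Int.cast : ℤ → ℝ)).mulVec x ≤ (fun i => (bS i : ℝ)) →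
        (∑ i, x i) = (n : ℝ) →
        (∃ o : Fin k → ℝ, (∀ i, 0 ≤ o i) ∧ (fun i => (c i : ℝ)) ⬝ᵥ o ≤ B ∧
          (AT.map (Int.cast : ℤ → ℝ)).mulVec (x + Matrix.vecMul o (M.map (Int.cast : ℤ → ℝ)))
            ≤ (fun i => (bT i : ℝ))) →
      -- there is a nearby integer solution x′ ∈ S_{n,B}:
      ∃ x' : Fin q → ℤ, (∀ i, 0 ≤ x' i) ∧ AS.mulVec x' ≤ bS ∧ (∑ i, x' i) = (n : ℤ) ∧
        (∃ o : Fin k → ℤ, (∀ i, 0 ≤ o i) ∧ ((c ⬝ᵥ o : ℤ) : ℝ) ≤ B ∧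
          AT.mulVec (x' + Matrix.vecMul o M) ≤ bT) ∧
        ‖x - (fun i => ((x' i : ℝ)))‖ < C' := by
  classical
  set Arows : (Fin mS ⊕ Fin mT ⊕ Fin q ⊕ Fin k ⊕ Fin 3) → ((Fin q ⊕ Fin k) → ℤ) :=
    Sum.elim (fun i => Sum.elim (fun j => AS i j) 0)
      (Sum.elim (fun i => Sum.elim (fun j => AT i j) (fun l => ∑ j, AT i j * M l j))
        (Sum.elim (fun j0 => Sum.elim (fun j => if j = j0 then -1 else 0) 0)
          (Sum.elim (fun l0 => Sum.elim 0 (fun l => if l = l0 then -1 else 0))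
            (fun r => if r = 0 then Sum.elim (fun _ => 1) 0
              else if r = 1 then Sum.elim (fun _ => -1) 0
              else Sum.elim 0 (fun l => c l))))) with hA
  obtain ⟨C, hC0, hmain⟩ := Stmt10.cgst Arows
  refine ⟨C + 1, ?_⟩
  intro n B hB hne x hx0 hxS hxSum hfr
  obtain ⟨xs, hxs0, hxsS, hxsSum, os, hos0, hosB, hosT⟩ := hne
  obtain ⟨o, ho0, hoB, hoT⟩ := hfr
  set b : (Fin mS ⊕ Fin mT ⊕ Fin q ⊕ Fin k ⊕ Fin 3) → ℝ :=
    Sum.elim (fun i => (bS i : ℝ))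
      (Sum.elim (fun i => (bT i : ℝ))
        (Sum.elim (fun _ => 0)
          (Sum.elim (fun _ => 0)
            (fun r => if r = 0 then (n : ℝ) else if r = 1 then -(n : ℝ) else B)))) with hbdef
  -- generic feasibility check
  have hfeas : ∀ (y : Fin q → ℝ) (u : Fin k → ℝ),
      (∀ j, 0 ≤ y j) → (∀ i, (∑ j, (AS i j : ℝ) * y j) ≤ (bS i : ℝ)) →
      ((∑ j, y j) = (n : ℝ)) →
      (∀ l, 0 ≤ u l) → ((∑ l, (c l : ℝ) * u l) ≤ B) →
      (∀ i, (∑ j, (AT i j : ℝ) * (y j + ∑ l, u l * (M l j : ℝ))) ≤ (bT i : ℝ)) →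
      ∀ i, Stmt10.dotR (Arows i) (Sum.elim y u) ≤ b i := by
    intro y u hy0 hyS hySum hu0 huB hyT i
    rcases i with i | i | j0 | l0 | r
    · simp only [hA, hbdef, Sum.elim_inl, Sum.elim_inr]
      rw [Stmt10.dotR_elim]
      simp only [Sum.elim_inl, Sum.elim_inr, Pi.zero_apply, Int.cast_zero, zero_mul,
        Finset.sum_const_zero, add_zero]
      exact hyS i
    · simp only [hA, hbdef, Sum.elim_inl, Sum.elim_inr]
      rw [Stmt10.dotR_elim]
      simp only [Sum.elim_inl, Sum.elim_inr]
      have := hyT i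
      rw [Stmt10.rearr (R := ℝ) (fun i j => (AT i j : ℝ)) (fun l j => (M l j : ℝ)) y u i] at this
      convert this using 2
      · exact (Finset.sum_congr rfl fun l _ => by push_cast; ring)
    · simp only [hA, hbdef, Sum.elim_inl, Sum.elim_inr]
      rw [Stmt10.dotR_elim]
      simp only [Sum.elim_inl, Sum.elim_inr, Pi.zero_apply, Int.cast_zero, zero_mul,
        Finset.sum_const_zero, add_zero]
      rw [Stmt10.sum_ite_neg]
      linarith [hy0 j0]
    · simp only [hA, hbdef, Sum.elim_inl, Sum.elim_inr]
      rw [Stmt10.dotR_elim]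
      simp only [Sum.elim_inl, Sum.elim_inr, Pi.zero_apply, Int.cast_zero, zero_mul,
        Finset.sum_const_zero, zero_add]
      rw [Stmt10.sum_ite_neg]
      linarith [hu0 l0]
    · simp only [hA, hbdef, Sum.elim_inl, Sum.elim_inr]
      by_cases hr0 : r = 0
      · subst hr0
        simp only [eq_self_iff_true, if_true]
        rw [Stmt10.dotR_elim]
        simp only [Sum.elim_inl, Sum.elim_inr, Pi.zero_apply, Int.cast_zero, zero_mul,
          Finset.sum_const_zero, add_zero, Int.cast_one, one_mul]
        rw [hySum]
      · by_cases hr1 : r = 1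
        · subst hr1
          simp only [if_neg hr0, eq_self_iff_true, if_true]
          rw [Stmt10.dotR_elim]
          simp only [Sum.elim_inl, Sum.elim_inr, Pi.zero_apply, Int.cast_zero, zero_mul,
            Finset.sum_const_zero, add_zero]
          have : (∑ j, ((-1 : ℤ) : ℝ) * y j) = -(∑ j, y j) := by
            push_cast
            rw [← Finset.sum_neg_distrib]
            exact Finset.sum_congr rfl fun j _ => by ring
          rw [this, hySum]
        · simp only [if_neg hr0, if_neg hr1]
          rw [Stmt10.dotR_elim]
          simp only [Sum.elim_inl, Sum.elim_inr, Pi.zero_apply, Int.cast_zero, zero_mul,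
            Finset.sum_const_zero, zero_add]
          exact huB
  -- feasibility of the integer point
  have hcastelim : Stmt10.castVec (Sum.elim xs os)
      = Sum.elim (fun j => ((xs j : ℤ) : ℝ)) (fun l => ((os l : ℤ) : ℝ)) := by
    funext z; cases z <;> rfl
  have hstar : ∀ i, Stmt10.dotR (Arows i) (Stmt10.castVec (Sum.elim xs os)) ≤ b i := by
    rw [hcastelim]
    apply hfeas
    · intro j; exact_mod_cast hxs0 j
    · intro i
      have := hxsS i
      simp only [Matrix.mulVec, dotProduct] at this
      exact_mod_cast this
    · exact_mod_cast hxsSum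
    · intro l; exact_mod_cast hos0 l
    · have : ((c ⬝ᵥ os : ℤ) : ℝ) = ∑ l, (c l : ℝ) * (os l : ℝ) := by
        simp only [dotProduct]; push_cast; rfl
      rw [← this]; exact hosB
    · intro i
      have := hosT i
      simp only [Matrix.mulVec, dotProduct, Pi.add_apply, Matrix.vecMul] at this
      have hcast : (∑ j, (AT i j : ℝ) * ((xs j : ℝ) + ∑ l, (os l : ℝ) * (M l j : ℝ)))
          = ((∑ j, AT i j * (xs j + ∑ l, os l * M l j) : ℤ) : ℝ) := by
        push_cast; rfl
      rw [hcast]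
      exact_mod_cast this
  -- feasibility of the fractional point
  have hhat : ∀ i, Stmt10.dotR (Arows i) (Sum.elim x o) ≤ b i := by
    apply hfeas
    · exact hx0
    · intro i
      have := hxS i
      simp only [Matrix.mulVec, dotProduct, Matrix.map_apply] at this
      exact this
    · exact hxSum
    · exact ho0
    · have := hoB
      simp only [dotProduct] at this
      exact this
    · intro i
      have := hoT i
      simp only [Matrix.mulVec, dotProduct, Pi.add_apply, Matrix.vecMul,
        Matrix.map_apply] at this
      exact this
  obtain ⟨z', hz'feas, hz'close⟩ := hmain b (Sum.elim xs os) hstar (Sum.elim x o) hhat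
  set x' : Fin q → ℤ := fun j => z' (Sum.inl j) with hx'def
  set o' : Fin k → ℤ := fun l => z' (Sum.inr l) with ho'def
  have hz'elim : Stmt10.castVec z'
      = Sum.elim (fun j => ((x' j : ℤ) : ℝ)) (fun l => ((o' l : ℤ) : ℝ)) := by
    funext z; cases z <;> rfl
  -- extract the integer facts from feasibility of z'
  have hx'0 : ∀ j, 0 ≤ x' j := by
    intro j0
    have := hz'feas (Sum.inr (Sum.inr (Sum.inl j0)))
    rw [hz'elim] at this
    simp only [hA, hbdef, Sum.elim_inl, Sum.elim_inr] at this
    rw [Stmt10.dotR_elim] at this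
    simp only [Sum.elim_inl, Sum.elim_inr, Pi.zero_apply, Int.cast_zero, zero_mul,
      Finset.sum_const_zero, add_zero] at this
    rw [Stmt10.sum_ite_neg] at this
    have : (0:ℝ) ≤ (x' j0 : ℝ) := by linarith
    exact_mod_cast this
  have ho'0 : ∀ l, 0 ≤ o' l := by
    intro l0
    have := hz'feas (Sum.inr (Sum.inr (Sum.inr (Sum.inl l0))))
    rw [hz'elim] at this
    simp only [hA, hbdef, Sum.elim_inl, Sum.elim_inr] at this
    rw [Stmt10.dotR_elim] at this
    simp only [Sum.elim_inl, Sum.elim_inr, Pi.zero_apply, Int.cast_zero, zero_mul,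
      Finset.sum_const_zero, zero_add] at this
    rw [Stmt10.sum_ite_neg] at this
    have : (0:ℝ) ≤ (o' l0 : ℝ) := by linarith
    exact_mod_cast this
  have hx'S : AS.mulVec x' ≤ bS := by
    intro i
    have := hz'feas (Sum.inl i)
    rw [hz'elim] at this
    simp only [hA, hbdef, Sum.elim_inl, Sum.elim_inr] at this
    rw [Stmt10.dotR_elim] at this
    simp only [Sum.elim_inl, Sum.elim_inr, Pi.zero_apply, Int.cast_zero, zero_mul,
      Finset.sum_const_zero, add_zero] at this
    simp only [Matrix.mulVec, dotProduct]
    exact_mod_cast this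
  have hsum1 : (∑ j, x' j) = (n : ℤ) := by
    have hle := hz'feas (Sum.inr (Sum.inr (Sum.inr (Sum.inr 0))))
    have hge := hz'feas (Sum.inr (Sum.inr (Sum.inr (Sum.inr 1))))
    rw [hz'elim] at hle hge
    simp only [hA, hbdef, Sum.elim_inl, Sum.elim_inr, eq_self_iff_true, if_true] at hle
    have h0 : (1 : Fin 3) ≠ 0 := by decide
    simp only [hA, hbdef, Sum.elim_inl, Sum.elim_inr, if_neg h0, eq_self_iff_true,
      if_true] at hge
    rw [Stmt10.dotR_elim] at hle hge
    simp only [Sum.elim_inl, Sum.elim_inr, Pi.zero_apply, Int.cast_zero, zero_mul,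
      Finset.sum_const_zero, add_zero, Int.cast_one, one_mul] at hle
    simp only [Sum.elim_inl, Sum.elim_inr, Pi.zero_apply, Int.cast_zero, zero_mul,
      Finset.sum_const_zero, add_zero] at hge
    have hge' : -(∑ j, (x' j : ℝ)) ≤ -(n : ℝ) := by
      have : (∑ j, ((-1 : ℤ) : ℝ) * (x' j : ℝ)) = -(∑ j, (x' j : ℝ)) := by
        push_cast
        rw [← Finset.sum_neg_distrib]
        exact Finset.sum_congr rfl fun j _ => by ring
      rw [this] at hge
      exact hge
    have heq : (∑ j, (x' j : ℝ)) = (n : ℝ) := le_antisymm hle (by linarith)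
    exact_mod_cast heq
  have ho'B : ((c ⬝ᵥ o' : ℤ) : ℝ) ≤ B := by
    have := hz'feas (Sum.inr (Sum.inr (Sum.inr (Sum.inr 2))))
    rw [hz'elim] at this
    have h0 : (2 : Fin 3) ≠ 0 := by decide
    have h1 : (2 : Fin 3) ≠ 1 := by decide
    simp only [hA, hbdef, Sum.elim_inl, Sum.elim_inr, if_neg h0, if_neg h1] at this
    rw [Stmt10.dotR_elim] at this
    simp only [Sum.elim_inl, Sum.elim_inr, Pi.zero_apply, Int.cast_zero, zero_mul,
      Finset.sum_const_zero, zero_add] at this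
    have hcast : ((c ⬝ᵥ o' : ℤ) : ℝ) = ∑ l, (c l : ℝ) * (o' l : ℝ) := by
      simp only [dotProduct]; push_cast; rfl
    rw [hcast]
    exact this
  have ho'T : AT.mulVec (x' + Matrix.vecMul o' M) ≤ bT := by
    intro i
    have := hz'feas (Sum.inr (Sum.inl i))
    rw [hz'elim] at this
    simp only [hA, hbdef, Sum.elim_inl, Sum.elim_inr] at this
    rw [Stmt10.dotR_elim] at this
    simp only [Sum.elim_inl, Sum.elim_inr] at this
    have hR : (∑ j, (AT i j : ℝ) * ((x' j : ℝ) + ∑ l, (o' l : ℝ) * (M l j : ℝ)))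
        = (∑ j, (AT i j : ℝ) * (x' j : ℝ))
          + ∑ l, (∑ j, (AT i j : ℝ) * (M l j : ℝ)) * (o' l : ℝ) :=
      Stmt10.rearr (R := ℝ) (fun i j => (AT i j : ℝ)) (fun l j => (M l j : ℝ)) _ _ i
    have hcoef : (∑ l, (((∑ j, AT i j * M l j : ℤ)) : ℝ) * (o' l : ℝ))
        = ∑ l, (∑ j, (AT i j : ℝ) * (M l j : ℝ)) * (o' l : ℝ) := by
      exact Finset.sum_congr rfl fun l _ => by push_cast; ring
    rw [hcoef] at this
    rw [← hR] at this
    have hZ : ((∑ j, AT i j * (x' j + ∑ l, o' l * M l j) : ℤ) : ℝ)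
        = ∑ j, (AT i j : ℝ) * ((x' j : ℝ) + ∑ l, (o' l : ℝ) * (M l j : ℝ)) := by
      push_cast; rfl
    simp only [Matrix.mulVec, dotProduct, Pi.add_apply, Matrix.vecMul]
    have : ((∑ j, AT i j * (x' j + ∑ l, o' l * M l j) : ℤ) : ℝ) ≤ (bT i : ℝ) := by
      rw [hZ]; exact this
    exact_mod_cast this
  refine ⟨x', hx'0, hx'S, hsum1, ⟨o', ho'0, ho'B, ho'T⟩, ?_⟩
  have hnorm : ‖x - (fun i => ((x' i : ℝ)))‖ ≤ C := by
    rw [pi_norm_le_iff_of_nonneg hC0]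
    intro j
    have := hz'close (Sum.inl j)
    simp only [Sum.elim_inl] at this
    simpa [Real.norm_eq_abs, hx'def] using this
  linarith
end

section
/- Consider the PMV-instability setting with polyhedral cones C_S° = {x : A_S x ≤ 0}, C_T° = {x : A_T x ≤ 0} in ℝ^q. Suppose dim(C_T°) = q and there is an interior point y of C_S° of the form y = x − oᵀM_O where x is an interior point of C_T° and o ≥ 0. Then d_∞ := dim(Cone_∞) = dim(C_S°), where Cone_∞ = {z ∈ C_S° : ∃ w ∈ ℝ_{≥0}^{|O|}, z + wᵀM_O ∈ C_T°}. -/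
open Matrix

/-- The dimension of a set in `ℝ^q`: the dimension of (the direction of) its affine hull. -/
noncomputable def setDim {q : ℕ} (S : Set (Fin q → ℝ)) : ℕ :=
  Module.finrank ℝ (affineSpan ℝ S).direction

/-- From intrinsic-interior membership, extract a radius `δ` such that the `δ`-ball
around the point intersected with the affine span is inside the set. -/
lemma intrinsicInterior_ball {q : ℕ} {s : Set (Fin q → ℝ)} {p : Fin q → ℝ}
    (hp : p ∈ intrinsicInterior ℝ s) :
    ∃ δ > 0, ∀ z ∈ (affineSpan ℝ s : Set (Fin q → ℝ)), dist z p < δ → z ∈ s := by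
  obtain ⟨p', hp', rfl⟩ := hp
  obtain ⟨δ, hδ, hball⟩ := Metric.isOpen_iff.mp isOpen_interior p' hp'
  refine ⟨δ, hδ, fun z hz hdz => ?_⟩
  have : (⟨z, hz⟩ : affineSpan ℝ s) ∈ Metric.ball p' δ := by
    simpa [Metric.mem_ball, Subtype.dist_eq] using hdz
  have h2 := interior_subset (hball this)
  exact h2

/-- In the PMV-instability setting, if `C_T° = {x : A_T x ≤ 0}` is full-dimensional and
some (relative) interior point `y` of `C_S° = {x : A_S x ≤ 0}` has the form
`y = x − oᵀM` with `x` a (relative) interior point of `C_T°` and `o ≥ 0`, then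
`d_∞ = dim(Cone_∞) = dim(C_S°)`. -/
theorem stmt12 {q k mS mT : ℕ}
    (AS : Matrix (Fin mS) (Fin q) ℝ) (AT : Matrix (Fin mT) (Fin q) ℝ)
    (M : Matrix (Fin k) (Fin q) ℝ)
    (hdimT : setDim {x : Fin q → ℝ | AT.mulVec x ≤ 0} = q)
    (x y : Fin q → ℝ) (o : Fin k → ℝ) (ho : ∀ i, 0 ≤ o i)
    (hx : x ∈ intrinsicInterior ℝ {z : Fin q → ℝ | AT.mulVec z ≤ 0})
    (hy : y ∈ intrinsicInterior ℝ {z : Fin q → ℝ | AS.mulVec z ≤ 0})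
    (hxy : y = x - Matrix.vecMul o M) :
    setDim {z : Fin q → ℝ | AS.mulVec z ≤ 0 ∧
        ∃ w : Fin k → ℝ, (∀ i, 0 ≤ w i) ∧ AT.mulVec (z + Matrix.vecMul w M) ≤ 0}
      = setDim {z : Fin q → ℝ | AS.mulVec z ≤ 0} := by
  set T : Set (Fin q → ℝ) := {z | AT.mulVec z ≤ 0} with hT
  set S : Set (Fin q → ℝ) := {z | AS.mulVec z ≤ 0} with hS
  set K : Set (Fin q → ℝ) := {z | AS.mulVec z ≤ 0 ∧
      ∃ w : Fin k → ℝ, (∀ i, 0 ≤ w i) ∧ AT.mulVec (z + Matrix.vecMul w M) ≤ 0} with hK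
  -- affineSpan of T is everything
  have hTspan : affineSpan ℝ T = ⊤ := by
    have hne : (affineSpan ℝ T : Set (Fin q → ℝ)).Nonempty :=
      ⟨0, subset_affineSpan ℝ T (by simp [hT, Set.mem_setOf_eq, Matrix.mulVec_zero])⟩
    have hdir : (affineSpan ℝ T).direction = ⊤ := by
      apply Submodule.eq_top_of_finrank_eq
      rw [Module.finrank_fin_fun ℝ]
      exact hdimT
    exact (AffineSubspace.direction_eq_top_iff_of_nonempty hne).mp hdir
  -- x has a full ball inside T
  obtain ⟨ε, hε, hballT⟩ := intrinsicInterior_ball hx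
  have hballT' : ∀ z : Fin q → ℝ, dist z x < ε → z ∈ T := fun z hz =>
    hballT z (by rw [hTspan]; trivial) hz
  -- y has a relative ball inside S
  obtain ⟨δ₀, hδ₀, hballS⟩ := intrinsicInterior_ball hy
  set δ := min δ₀ ε with hδdef
  have hδ : 0 < δ := lt_min hδ₀ hε
  have hyS : y ∈ S := intrinsicInterior_subset hy
  have hySpan : y ∈ affineSpan ℝ S := subset_affineSpan ℝ S hyS
  -- the relative ball around y lies in K
  have hUK : ∀ z ∈ (affineSpan ℝ S : Set (Fin q → ℝ)), dist z y < δ → z ∈ K := by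
    intro z hz hdz
    have hzS : z ∈ S := hballS z hz (lt_of_lt_of_le hdz (min_le_left _ _))
    refine ⟨hzS, o, ho, ?_⟩
    have hvm : Matrix.vecMul o M = x - y := by rw [hxy]; abel
    have : z + Matrix.vecMul o M ∈ T := by
      apply hballT'
      rw [hvm]
      have : z + (x - y) - x = z - y := by abel
      rw [dist_eq_norm, this, ← dist_eq_norm]
      exact lt_of_lt_of_le hdz (min_le_right _ _)
    exact this
  -- affineSpan K = affineSpan S
  have hKS : K ⊆ S := fun z hz => hz.1
  have hle : affineSpan ℝ K ≤ affineSpan ℝ S := affineSpan_mono ℝ hKS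
  have hge : affineSpan ℝ S ≤ affineSpan ℝ K := by
    have hyK : y ∈ K := hUK y hySpan (by simpa using hδ)
    have hdirle : (affineSpan ℝ S).direction ≤ (affineSpan ℝ K).direction := by
      intro v hv
      by_cases hv0 : v = 0
      · simp [hv0]
      have hnv : 0 < ‖v‖ := norm_pos_iff.mpr hv0
      set c : ℝ := δ / (2 * ‖v‖) with hc
      have hcpos : 0 < c := div_pos hδ (by positivity)
      have hmem : y + c • v ∈ affineSpan ℝ S := by
        have := AffineSubspace.vadd_mem_of_mem_direction (Submodule.smul_mem _ c hv) hySpan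
        simpa [vadd_eq_add, add_comm] using this
      have hdist : dist (y + c • v) y < δ := by
        rw [dist_eq_norm]
        have : y + c • v - y = c • v := by abel
        rw [this, norm_smul, Real.norm_eq_abs, abs_of_pos hcpos, hc]
        rw [div_mul_eq_mul_div, div_lt_iff₀ (by positivity)]
        nlinarith
      have hzK : y + c • v ∈ K := hUK _ hmem hdist
      have hsub : c • v ∈ (affineSpan ℝ K).direction := by
        have := AffineSubspace.vsub_mem_direction
          (subset_affineSpan ℝ K hzK) (subset_affineSpan ℝ K hyK)
        simpa [vsub_eq_sub, add_sub_cancel_left] using this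
      have : c⁻¹ • (c • v) ∈ (affineSpan ℝ K).direction := Submodule.smul_mem _ _ hsub
      simpa [smul_smul, inv_mul_cancel₀ (ne_of_gt hcpos)] using this
    intro p hp
    have hv : p - y ∈ (affineSpan ℝ S).direction := by
      have := AffineSubspace.vsub_mem_direction hp hySpan
      simpa [vsub_eq_sub] using this
    have := AffineSubspace.vadd_mem_of_mem_direction (hdirle hv) (subset_affineSpan ℝ K hyK)
    simpa [vadd_eq_add, sub_add_cancel] using this
  have : affineSpan ℝ K = affineSpan ℝ S := le_antisymm hle hge
  unfold setDim
  rw [this]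
end

section
/- Under the veto rule (positional scoring rule with scoring vector (1,…,1,0)) on m ≥ 3 alternatives, no coalition of voters who all prefer the current loser to the current winner can make the loser win by misreporting: for every profile P and every budget B ≥ 0, CML(veto, P, B) = 0. -/
/-- A vote over `m` alternatives is a linear order, encoded as a bijection sending each
alternative to its position (`0` = most preferred, `m − 1` = last). The veto score of
alternative `a` in profile `P`: `a` gets one point from each vote that does not rank it
last. -/
def vetoScore {m n : ℕ} (P : Fin n → (Fin m ≃ Fin m)) (a : Fin m) : ℕ :=
  (Finset.univ.filter fun j => ((P j) a : ℕ) ≠ m - 1).card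

lemma veto_sum {m n : ℕ} (hm : 1 ≤ m) (P : Fin n → (Fin m ≃ Fin m)) :
    ∑ b, vetoScore P b = n * (m - 1) := by
  unfold vetoScore
  simp only [Finset.card_filter]
  rw [Finset.sum_comm]
  have key : ∀ j : Fin n, (∑ b : Fin m, if ((P j) b : ℕ) ≠ m - 1 then 1 else 0) = m - 1 := by
    intro j
    rw [← Finset.card_filter]
    have hlast : (m - 1) < m := by omega
    have hset : (Finset.univ.filter fun b : Fin m => ((P j) b : ℕ) ≠ m - 1)
        = Finset.univ \ {(P j).symm ⟨m - 1, hlast⟩} := by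
      ext b
      simp [Equiv.eq_symm_apply, Fin.ext_iff, eq_comm]
    rw [hset, Finset.card_sdiff_of_subset (by simp)]
    simp
  rw [Finset.sum_congr rfl (fun j _ => key j), Finset.sum_const]
  simp [mul_comm]

/-- Under the veto rule with lexicographic tie-breaking (`w` is the winner: maximal
score, least index among maximizers; `l ≠ w` is the loser: minimal score, least index
among minimizers), no coalition of at most `B` voters each of whom prefers `l` to `w`
can make `l` the winner by misreporting: `CML(veto, P, B) = 0`. -/
theorem stmt16 {m n : ℕ} (hm : 3 ≤ m) (P : Fin n → (Fin m ≃ Fin m)) (B : ℕ)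
    (w l : Fin m)
    (hwmax : ∀ b, vetoScore P b ≤ vetoScore P w)
    (hwlex : ∀ b, vetoScore P b = vetoScore P w → w ≤ b)
    (hlmin : ∀ b, vetoScore P l ≤ vetoScore P b)
    (hllex : ∀ b, vetoScore P b = vetoScore P l → l ≤ b)
    (hwl : w ≠ l)
    (P' : Fin n → (Fin m ≃ Fin m))
    (hcard : (Finset.univ.filter fun j => P' j ≠ P j).card ≤ B)
    (hpref : ∀ j, P' j ≠ P j → (P j) l < (P j) w) :
    ¬ ((∀ b, vetoScore P' b ≤ vetoScore P' l) ∧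
       (∀ b, vetoScore P' b = vetoScore P' l → l ≤ b)) := by
  rintro ⟨hmax', -⟩
  have hm1 : 1 ≤ m := by omega
  -- l's score can't increase: every coalition member already doesn't veto l
  have hL : vetoScore P' l ≤ vetoScore P l := by
    apply Finset.card_le_card
    intro j hj
    simp only [Finset.mem_filter, Finset.mem_univ, true_and] at hj ⊢
    by_cases h : P' j = P j
    · rwa [← h]
    · have h1 := hpref j h
      have h2 := ((P j) w).isLt
      have h3 : ((P j) l : ℕ) < ((P j) w : ℕ) := h1
      omega
  have hsum := veto_sum hm1 P
  have hsum' := veto_sum hm1 P'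
  have h1 : m * vetoScore P l ≤ n * (m - 1) := by
    rw [← hsum]
    calc m * vetoScore P l = (Finset.univ : Finset (Fin m)).card • vetoScore P l := by
          simp [mul_comm]
      _ ≤ ∑ b, vetoScore P b := Finset.card_nsmul_le_sum _ _ _ (fun b _ => hlmin b)
  have h2 : n * (m - 1) ≤ m * vetoScore P' l := by
    rw [← hsum']
    calc ∑ b, vetoScore P' b ≤ (Finset.univ : Finset (Fin m)).card • vetoScore P' l :=
          Finset.sum_le_card_nsmul _ _ _ (fun b _ => hmax' b)
      _ = m * vetoScore P' l := by simp [mul_comm]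
  have hmpos : 0 < m := by omega
  have heq : m * vetoScore P l = n * (m - 1) := by
    have : m * vetoScore P' l ≤ m * vetoScore P l := Nat.mul_le_mul_left m hL
    omega
  -- w's score equals l's score
  have hwle : vetoScore P w ≤ vetoScore P l := by
    have hsplit : vetoScore P w + ∑ b ∈ Finset.univ.erase w, vetoScore P b
        = ∑ b, vetoScore P b := Finset.add_sum_erase _ _ (Finset.mem_univ w)
    have hlow : (m - 1) * vetoScore P l ≤ ∑ b ∈ Finset.univ.erase w, vetoScore P b := by
      calc (m - 1) * vetoScore P l
          = (Finset.univ.erase w).card • vetoScore P l := by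
            simp [Finset.card_erase_of_mem, mul_comm]
        _ ≤ _ := Finset.card_nsmul_le_sum _ _ _ (fun b _ => hlmin b)
    have hml := hlmin w
    have hsub : (m - 1) * vetoScore P l + vetoScore P l = m * vetoScore P l := by
      have hm' : m - 1 + 1 = m := by omega
      calc (m - 1) * vetoScore P l + vetoScore P l
          = (m - 1 + 1) * vetoScore P l := by ring
        _ = m * vetoScore P l := by rw [hm']
    linarith [hsplit, hsum, heq, hlow, hsub]
  have hweq : vetoScore P w = vetoScore P l := le_antisymm hwle (hlmin w)
  have hwl1 : w ≤ l := hwlex l hweq.symm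
  have hwl2 : l ≤ w := hllex w hweq
  exact hwl (le_antisymm hwl1 hwl2)
end
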